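/- arXiv:1807.05993 — 2 statements merged into one kernel-verified Lean document; each statement's English description precedes it below -/
import Mathlib

section
/- Let S : ℝ → ℝ be continuously differentiable with m_S ≤ S'(φ) ≤ M_S for all φ ∈ ℝ, where 0 < m_S ≤ M_S. Define the energy functional W(ψ) = ∫₀^ψ S'(φ)·φ dφ. Then for all ψ, ξ ∈ ℝ one has W(ψ) − W(ξ) ≤ ψ·(S(ψ) − S(ξ)). -/
open MeasureTheory

/-- Lemma 4.4 (second inequality): for the energy functional
`W ψ = ∫₀^ψ S'(φ)·φ dφ` one has `W ψ − W ξ ≤ ψ·(S ψ − S ξ)`. -/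
theorem energy_functional_convexity_estimate
    (S : ℝ → ℝ) (m_S M_S : ℝ)
    (hm : 0 < m_S) (hmM : m_S ≤ M_S)
    (hS : ContDiff ℝ 1 S)
    (hS' : ∀ φ : ℝ, m_S ≤ deriv S φ ∧ deriv S φ ≤ M_S)
    (W : ℝ → ℝ)
    (hW : ∀ ψ : ℝ, W ψ = ∫ φ in (0:ℝ)..ψ, deriv S φ * φ) :
    ∀ ψ ξ : ℝ, W ψ - W ξ ≤ ψ * (S ψ - S ξ) := by
  have hc : Continuous (deriv S) := hS.continuous_deriv le_rfl
  intro ψ ξ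
  have hint1 : W ψ - W ξ = ∫ φ in ξ..ψ, deriv S φ * φ := by
    rw [hW, hW]
    exact intervalIntegral.integral_interval_sub_left
      ((hc.mul continuous_id).intervalIntegrable _ _)
      ((hc.mul continuous_id).intervalIntegrable _ _)
  have hS2 : S ψ - S ξ = ∫ φ in ξ..ψ, deriv S φ :=
    (intervalIntegral.integral_deriv_eq_sub
      (fun x _ => (hS.differentiable one_ne_zero) x)
      (hc.intervalIntegrable _ _)).symm
  rw [hint1, hS2, ← intervalIntegral.integral_const_mul]
  rcases le_total ξ ψ with h | h
  · apply intervalIntegral.integral_mono_on h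
      ((hc.mul continuous_id).intervalIntegrable _ _)
      ((continuous_const.mul hc).intervalIntegrable _ _)
    intro x hx
    have h0 : 0 ≤ deriv S x := hm.le.trans (hS' x).1
    simp only [Pi.mul_apply, id_eq]
    nlinarith [hx.2]
  · rw [intervalIntegral.integral_symm ψ ξ, intervalIntegral.integral_symm ψ ξ]
    apply neg_le_neg
    apply intervalIntegral.integral_mono_on h
      ((continuous_const.mul hc).intervalIntegrable _ _)
      ((hc.mul continuous_id).intervalIntegrable _ _)
    intro x hx
    have h0 : 0 ≤ deriv S x := hm.le.trans (hS' x).1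
    simp only [Pi.mul_apply, id_eq]
    nlinarith [hx.1]
end

section
/- Let L > 0, let Ω = (−1/2, 1/2) × (0, L), and let f : ℝ² → ℝ be continuously differentiable on a neighbourhood of the closure of Ω. Define f̄ : [0, L] → ℝ by f̄(y) = ∫_{−1/2}^{1/2} f(ξ, y) dξ. Then for each ξ₀ ∈ [−1/2, 1/2], ∫₀^L (f(ξ₀, y) − f̄(y))² dy ≤ ∫₀^L ∫_{−1/2}^{1/2} (∂_ξ f(ξ, y))² dξ dy. -/
open MeasureTheory

private lemma sq_integral_le_integral_sq {α : Type*} [MeasurableSpace α] (μ : Measure α)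
    [IsProbabilityMeasure μ] (h : α → ℝ) (h1 : Integrable h μ)
    (h2 : Integrable (fun x => h x ^ 2) μ) :
    (∫ x, h x ∂μ) ^ 2 ≤ ∫ x, h x ^ 2 ∂μ := by
  set c := ∫ x, h x ∂μ with hc
  have key : 0 ≤ ∫ x, (h x - c) ^ 2 ∂μ := integral_nonneg fun x => sq_nonneg _
  have i1 : Integrable (fun x => h x ^ 2 - 2 * c * h x) μ := h2.sub (h1.const_mul (2 * c))
  have e2 : ∫ x, (h x - c) ^ 2 ∂μ = (∫ x, h x ^ 2 ∂μ) - c ^ 2 := by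
    calc ∫ x, (h x - c) ^ 2 ∂μ = ∫ x, ((h x ^ 2 - 2 * c * h x) + c ^ 2) ∂μ := by
          apply integral_congr_ae
          filter_upwards with x
          ring
      _ = (∫ x, (h x ^ 2 - 2 * c * h x) ∂μ) + c ^ 2 := by
          rw [integral_add i1 (integrable_const _), integral_const]
          simp [measure_univ]
      _ = (∫ x, h x ^ 2 ∂μ) - c ^ 2 := by
          rw [integral_sub h2 (h1.const_mul (2 * c)), integral_const_mul, ← hc]
          ring
  rw [e2] at key
  linarith

/-- Proposition 5.3 (averaging estimate): for `Ω = (−1/2, 1/2) × (0, L)` and a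
function `f` that is C¹ on a neighbourhood of the closure of `Ω`, with
transversal average `f̄(y) = ∫_{−1/2}^{1/2} f(ξ, y) dξ`, one has for each
`ξ₀ ∈ [−1/2, 1/2]`:
`∫₀^L (f(ξ₀,y) − f̄(y))² dy ≤ ∫₀^L ∫_{−1/2}^{1/2} (∂_ξ f(ξ,y))² dξ dy`. -/
theorem averaging_trace_estimate
    (L : ℝ) (hL : 0 < L)
    (f : ℝ × ℝ → ℝ)
    (U : Set (ℝ × ℝ)) (hU : IsOpen U)
    (hclos : closure (Set.Ioo (-(1:ℝ)/2) (1/2) ×ˢ Set.Ioo (0:ℝ) L) ⊆ U)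
    (hf : ContDiffOn ℝ 1 f U) :
    ∀ ξ₀ ∈ Set.Icc (-(1:ℝ)/2) (1/2),
      (∫ y in (0:ℝ)..L,
          (f (ξ₀, y) - ∫ ξ in (-(1:ℝ)/2)..(1/2), f (ξ, y)) ^ 2) ≤
        ∫ y in (0:ℝ)..L,
          ∫ ξ in (-(1:ℝ)/2)..(1/2), (deriv (fun t => f (t, y)) ξ) ^ 2 := by
  intro ξ₀ hξ₀
  set a : ℝ := -(1:ℝ)/2 with ha
  set b : ℝ := 1/2 with hb
  have hab : a ≤ b := by norm_num [ha, hb]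
  have hba : b - a = 1 := by norm_num [ha, hb]
  set K : Set (ℝ × ℝ) := Set.Icc a b ×ˢ Set.Icc 0 L with hK
  have hKU : K ⊆ U := by
    have h1 : a ≠ b := by norm_num [ha, hb]
    rw [closure_prod_eq, closure_Ioo h1, closure_Ioo hL.ne] at hclos
    exact hclos
  have hfc : ContinuousOn f U := hf.continuousOn
  set g : ℝ × ℝ → ℝ := fun p => fderiv ℝ f p (1, 0) with hg
  have hgc : ContinuousOn g U :=
    (hf.continuousOn_fderiv_of_isOpen hU le_rfl).clm_apply continuousOn_const
  have hd : ∀ x y : ℝ, (x, y) ∈ U → HasDerivAt (fun t => f (t, y)) (g (x, y)) x := by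
    intro x y hp
    have hdf : DifferentiableAt ℝ f (x, y) :=
      (hf.differentiableOn one_ne_zero).differentiableAt (hU.mem_nhds hp)
    have h2 : HasDerivAt (fun t : ℝ => ((t, y) : ℝ × ℝ)) (1, 0) x :=
      (hasDerivAt_id x).prodMk (hasDerivAt_const x y)
    exact hdf.hasFDerivAt.comp_hasDerivAt x h2
  -- clamp map
  set π : ℝ × ℝ → ℝ × ℝ := fun p => (max a (min b p.1), max 0 (min L p.2)) with hπ
  have hπc : Continuous π := by fun_prop
  have hπK : ∀ p, π p ∈ K := by
    intro p
    exact ⟨⟨le_max_left _ _, max_le hab (min_le_left _ _)⟩,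
      ⟨le_max_left _ _, max_le hL.le (min_le_left _ _)⟩⟩
  have hπid : ∀ p ∈ K, π p = p := by
    rintro ⟨x, y⟩ ⟨⟨h1, h2⟩, h3, h4⟩
    simp only [hπ, Prod.mk.injEq]
    constructor
    · rw [min_eq_right h2, max_eq_right h1]
    · rw [min_eq_right h4, max_eq_right h3]
  set F : ℝ × ℝ → ℝ := fun p => f (π p) with hF
  set G : ℝ × ℝ → ℝ := fun p => g (π p) with hG
  have hFc : Continuous F := hfc.comp_continuous hπc fun p => hKU (hπK p)
  have hGc : Continuous G := hgc.comp_continuous hπc fun p => hKU (hπK p)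
  have hFeq : ∀ p ∈ K, F p = f p := fun p hp => by simp only [hF]; rw [hπid p hp]
  have hGeq : ∀ p ∈ K, G p = g p := fun p hp => by simp only [hG]; rw [hπid p hp]
  have hprob : IsProbabilityMeasure (volume.restrict (Set.Ioc a b)) := by
    constructor
    rw [Measure.restrict_apply_univ, Real.volume_Ioc, hba, ENNReal.ofReal_one]
  -- pointwise estimate
  have main : ∀ y ∈ Set.Icc (0:ℝ) L,
      (F (ξ₀, y) - ∫ ξ in a..b, F (ξ, y)) ^ 2 ≤ ∫ ξ in a..b, (G (ξ, y)) ^ 2 := by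
    intro y hy
    have hmem : ∀ x ∈ Set.Icc a b, ((x, y) : ℝ × ℝ) ∈ K := fun x hx => ⟨hx, hy⟩
    have hGyc : Continuous fun x => G (x, y) := hGc.comp (by fun_prop)
    have hFyc : Continuous fun x => F (x, y) := hFc.comp (by fun_prop)
    have hFyeq : ∀ ξ ∈ Set.Icc a b, F (ξ, y) = f (ξ, y) := fun ξ hξ => hFeq _ (hmem ξ hξ)
    have hInn : (0:ℝ) ≤ ∫ x in a..b, |G (x, y)| :=
      intervalIntegral.integral_nonneg hab fun x _ => abs_nonneg _
    have ftc : ∀ ξ ∈ Set.Icc a b, f (ξ₀, y) - f (ξ, y) = ∫ x in ξ..ξ₀, G (x, y) := by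
      intro ξ hξ
      have hsub : Set.uIcc ξ ξ₀ ⊆ Set.Icc a b := Set.uIcc_subset_Icc hξ hξ₀
      have hder : ∀ x ∈ Set.uIcc ξ ξ₀, HasDerivAt (fun t => f (t, y)) (G (x, y)) x := by
        intro x hx
        have hxK : ((x, y) : ℝ × ℝ) ∈ K := hmem x (hsub hx)
        have h := hd x y (hKU hxK)
        rwa [← hGeq _ hxK] at h
      exact (intervalIntegral.integral_eq_sub_of_hasDerivAt hder
        (hGyc.intervalIntegrable _ _)).symm
    have step2 : ∀ ξ ∈ Set.Icc a b,
        |f (ξ₀, y) - f (ξ, y)| ≤ ∫ x in a..b, |G (x, y)| := by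
      intro ξ hξ
      rw [ftc ξ hξ]
      have hsub : Set.uIoc ξ ξ₀ ⊆ Set.uIoc a b :=
        Set.uIoc_subset_uIoc_of_uIcc_subset_uIcc
          (by rw [Set.uIcc_of_le hab]; exact Set.uIcc_subset_Icc hξ hξ₀)
      calc |∫ x in ξ..ξ₀, G (x, y)| ≤ |(∫ x in ξ..ξ₀, |G (x, y)|)| := by
            simpa [Real.norm_eq_abs] using
              intervalIntegral.norm_integral_le_abs_integral_norm
                (f := fun x => G (x, y)) (a := ξ) (b := ξ₀) (μ := volume)
        _ ≤ |(∫ x in a..b, |G (x, y)|)| :=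
            intervalIntegral.abs_integral_mono_interval hsub
              (ae_of_all _ fun x => abs_nonneg _) (hGyc.abs.intervalIntegrable _ _)
        _ = ∫ x in a..b, |G (x, y)| := abs_of_nonneg hInn
    have hd2 : F (ξ₀, y) - (∫ ξ in a..b, F (ξ, y))
        = ∫ ξ in a..b, (F (ξ₀, y) - F (ξ, y)) := by
      rw [intervalIntegral.integral_sub (intervalIntegrable_const)
        (hFyc.intervalIntegrable _ _), intervalIntegral.integral_const, hba, one_smul]
    have step3 : |F (ξ₀, y) - (∫ ξ in a..b, F (ξ, y))| ≤ ∫ x in a..b, |G (x, y)| := by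
      rw [hd2]
      calc |∫ ξ in a..b, (F (ξ₀, y) - F (ξ, y))|
          ≤ (∫ ξ in a..b, |F (ξ₀, y) - F (ξ, y)|) := by
            simpa [Real.norm_eq_abs] using
              intervalIntegral.norm_integral_le_integral_norm
                (f := fun ξ => F (ξ₀, y) - F (ξ, y)) (μ := volume) hab
        _ ≤ (∫ _ in a..b, (∫ x in a..b, |G (x, y)|)) := by
            apply intervalIntegral.integral_mono_on hab
              (((continuous_const.sub hFyc).abs).intervalIntegrable _ _)
              (intervalIntegrable_const)
            intro ξ hξ
            show |F (ξ₀, y) - F (ξ, y)| ≤ _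
            rw [hFyeq ξ hξ, hFyeq ξ₀ hξ₀]
            exact step2 ξ hξ
        _ = ∫ x in a..b, |G (x, y)| := by
            rw [intervalIntegral.integral_const, hba, one_smul]
    have step4 : (∫ x in a..b, |G (x, y)|) ^ 2 ≤ ∫ x in a..b, G (x, y) ^ 2 := by
      have h1 : Integrable (fun x => |G (x, y)|) (volume.restrict (Set.Ioc a b)) :=
        (intervalIntegrable_iff_integrableOn_Ioc_of_le hab).mp
          (hGyc.abs.intervalIntegrable _ _)
      have h2 : Integrable (fun x => |G (x, y)| ^ 2) (volume.restrict (Set.Ioc a b)) :=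
        (intervalIntegrable_iff_integrableOn_Ioc_of_le hab).mp
          ((hGyc.abs.pow 2).intervalIntegrable _ _)
      have h := sq_integral_le_integral_sq (volume.restrict (Set.Ioc a b))
        (fun x => |G (x, y)|) h1 h2
      rw [intervalIntegral.integral_of_le hab, intervalIntegral.integral_of_le hab]
      simpa [sq_abs] using h
    calc (F (ξ₀, y) - ∫ ξ in a..b, F (ξ, y)) ^ 2
        = |F (ξ₀, y) - (∫ ξ in a..b, F (ξ, y))| ^ 2 := (sq_abs _).symm
      _ ≤ (∫ x in a..b, |G (x, y)|) ^ 2 := pow_le_pow_left₀ (abs_nonneg _) step3 2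
      _ ≤ ∫ x in a..b, G (x, y) ^ 2 := step4
  -- continuity of both outer integrands
  have hcF : Continuous fun y : ℝ => (F (ξ₀, y) - ∫ ξ in a..b, F (ξ, y)) ^ 2 := by
    have h1 : Continuous fun y : ℝ => ∫ ξ in a..b, F (ξ, y) := by
      apply intervalIntegral.continuous_parametric_intervalIntegral_of_continuous'
        (f := fun (y : ℝ) (ξ : ℝ) => F (ξ, y))
      exact hFc.comp continuous_swap
    exact ((hFc.comp (by fun_prop)).sub h1).pow 2
  have hcG : Continuous fun y : ℝ => ∫ ξ in a..b, (G (ξ, y)) ^ 2 := by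
    apply intervalIntegral.continuous_parametric_intervalIntegral_of_continuous'
      (f := fun (y : ℝ) (ξ : ℝ) => (G (ξ, y)) ^ 2)
    exact (hGc.comp continuous_swap).pow 2
  -- rewrite both sides in terms of F and G
  have eL : (∫ y in (0:ℝ)..L, (f (ξ₀, y) - ∫ ξ in a..b, f (ξ, y)) ^ 2)
      = ∫ y in (0:ℝ)..L, (F (ξ₀, y) - ∫ ξ in a..b, F (ξ, y)) ^ 2 := by
    apply intervalIntegral.integral_congr
    intro y hy
    rw [Set.uIcc_of_le hL.le] at hy
    have h1 : f (ξ₀, y) = F (ξ₀, y) := (hFeq _ ⟨hξ₀, hy⟩).symm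
    have h2 : (∫ ξ in a..b, f (ξ, y)) = ∫ ξ in a..b, F (ξ, y) := by
      apply intervalIntegral.integral_congr
      intro ξ hξ
      rw [Set.uIcc_of_le hab] at hξ
      exact (hFeq _ ⟨hξ, hy⟩).symm
    simp only [h1, h2]
  have eR : (∫ y in (0:ℝ)..L, ∫ ξ in a..b, (deriv (fun t => f (t, y)) ξ) ^ 2)
      = ∫ y in (0:ℝ)..L, ∫ ξ in a..b, (G (ξ, y)) ^ 2 := by
    apply intervalIntegral.integral_congr
    intro y hy
    rw [Set.uIcc_of_le hL.le] at hy
    apply intervalIntegral.integral_congr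
    intro ξ hξ
    rw [Set.uIcc_of_le hab] at hξ
    have hξK : ((ξ, y) : ℝ × ℝ) ∈ K := ⟨hξ, hy⟩
    have h3 : deriv (fun t => f (t, y)) ξ = G (ξ, y) := by
      rw [(hd ξ y (hKU hξK)).deriv, hGeq _ hξK]
    simp only [h3]
  rw [eL, eR]
  exact intervalIntegral.integral_mono_on hL.le (hcF.intervalIntegrable _ _)
    (hcG.intervalIntegrable _ _) main
end
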